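/- arXiv:2506.03625 — 6 statements merged into one kernel-verified Lean document; each statement's English description precedes it below -/
import Mathlib

section
/- Let a ≥ 2 and b be coprime positive integers. Then the number π*(a,b) of primes not representable as au + bv with u, v nonnegative integers satisfies π*(a,b) = Σ_{v=1}^{a−1} #{p prime : p < bv and p ≡ bv (mod a)}. -/
/-- `piStar a b` is the number of primes not representable as `a*u + b*v`
with `u, v` nonnegative integers, i.e. the number of primes not in the
numerical semigroup `⟨a, b⟩`. -/
noncomputable def piStar (a b : ℕ) : ℕ :=
  Set.ncard {p : ℕ | p.Prime ∧ ¬ ∃ u v : ℕ, p = a * u + b * v}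

lemma piStar_key (a b : ℕ) (ha : 2 ≤ a) (hb : 0 < b) (hab : Nat.Coprime a b) (p : ℕ) :
    (¬ ∃ u v : ℕ, p = a * u + b * v) ↔
      ∃ v ∈ Finset.Icc 1 (a - 1), p < b * v ∧ p ≡ b * v [MOD a] := by
  haveI : NeZero a := ⟨by omega⟩
  constructor
  · intro h
    set r := ((p : ZMod a) * (b : ZMod a)⁻¹).val with hr
    have hrlt : r < a := ZMod.val_lt _
    have hbu : IsUnit (b : ZMod a) := by
      rw [ZMod.isUnit_iff_coprime]
      exact hab.symm
    have hcast : ((b * r : ℕ) : ZMod a) = (p : ZMod a) := by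
      push_cast [hr]
      rw [ZMod.natCast_val, ZMod.cast_id]
      rw [mul_comm (p : ZMod a), ← mul_assoc, ZMod.mul_inv_of_unit _ hbu, one_mul]
    have hmod : b * r ≡ p [MOD a] := (ZMod.natCast_eq_natCast_iff _ _ _).mp hcast
    rcases Nat.eq_zero_or_pos r with hr0 | hr0
    · exfalso
      apply h
      have : a ∣ p := by
        have := hmod
        rw [hr0, mul_zero] at this
        exact (Nat.modEq_zero_iff_dvd.mp this.symm)
      exact ⟨p / a, 0, by rw [Nat.mul_div_cancel' this, mul_zero, add_zero]⟩
    · refine ⟨r, Finset.mem_Icc.mpr ⟨hr0, by omega⟩, ?_, hmod.symm⟩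
      by_contra hle
      push_neg at hle
      apply h
      obtain ⟨k, hk⟩ := (Nat.modEq_iff_dvd' hle).mp hmod
      exact ⟨k, r, by omega⟩
  · rintro ⟨v, hv, hlt, hmod⟩ ⟨u, w, hp⟩
    rw [Finset.mem_Icc] at hv
    have h1 : b * w ≡ b * v [MOD a] := by
      calc b * w ≡ a * u + b * w [MOD a] := (Nat.modEq_iff_dvd' (by omega)).mpr ⟨u, by omega⟩
        _ = p := hp.symm
        _ ≡ b * v [MOD a] := hmod
    have h2 : w ≡ v [MOD a] := h1.cancel_left_of_coprime (by rw [Nat.Coprime] at hab; omega)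
    rcases lt_or_ge w v with hwv | hwv
    · obtain ⟨k, hk⟩ := (Nat.modEq_iff_dvd' hwv.le).mp h2
      rcases k with _ | k
      · omega
      · have : a ≤ a * (k + 1) := Nat.le_mul_of_pos_right a (Nat.succ_pos k)
        omega
    · have : b * v ≤ b * w := Nat.mul_le_mul_left b hwv
      omega

theorem piStar_eq_sum (a b : ℕ) (ha : 2 ≤ a) (hb : 0 < b)
    (hab : Nat.Coprime a b) :
    piStar a b =
      ∑ v ∈ Finset.Icc 1 (a - 1),
        Set.ncard {p : ℕ | p.Prime ∧ p < b * v ∧ p ≡ b * v [MOD a]} := by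
  classical
  set F : ℕ → Finset ℕ := fun v =>
    (Finset.range (b * v)).filter (fun p => p.Prime ∧ p ≡ b * v [MOD a]) with hF
  have hFmem : ∀ v p, p ∈ F v ↔ (p.Prime ∧ p < b * v ∧ p ≡ b * v [MOD a]) := by
    intro v p
    simp [hF, Finset.mem_filter, Finset.mem_range]
    tauto
  have hset : {p : ℕ | p.Prime ∧ ¬ ∃ u v : ℕ, p = a * u + b * v} =
      ↑((Finset.Icc 1 (a - 1)).biUnion F) := by
    ext p
    simp only [Set.mem_setOf_eq, Finset.coe_biUnion, Set.mem_iUnion, Finset.mem_coe,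
      Finset.mem_biUnion]
    constructor
    · rintro ⟨hp, hrep⟩
      obtain ⟨v, hv, hlt, hmod⟩ := (piStar_key a b ha hb hab p).mp hrep
      exact ⟨v, hv, (hFmem v p).mpr ⟨hp, hlt, hmod⟩⟩
    · rintro ⟨v, hv, hpF⟩
      obtain ⟨hp, hlt, hmod⟩ := (hFmem v p).mp hpF
      exact ⟨hp, (piStar_key a b ha hb hab p).mpr ⟨v, hv, hlt, hmod⟩⟩
  have hdisj : ∀ v ∈ Finset.Icc 1 (a - 1), ∀ v' ∈ Finset.Icc 1 (a - 1), v ≠ v' →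
      Disjoint (F v) (F v') := by
    intro v hv v' hv' hne
    rw [Finset.disjoint_left]
    intro p hpv hpv'
    obtain ⟨_, _, hm⟩ := (hFmem v p).mp hpv
    obtain ⟨_, _, hm'⟩ := (hFmem v' p).mp hpv'
    have h1 : b * v ≡ b * v' [MOD a] := hm.symm.trans hm'
    have h2 : v ≡ v' [MOD a] := h1.cancel_left_of_coprime (by rw [Nat.Coprime] at hab; omega)
    rw [Finset.mem_Icc] at hv hv'
    have : v % a = v' % a := h2
    rw [Nat.mod_eq_of_lt (by omega), Nat.mod_eq_of_lt (by omega)] at this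
    exact hne this
  rw [piStar, hset, Set.ncard_coe_finset, Finset.card_biUnion hdisj]
  refine Finset.sum_congr rfl fun v hv => ?_
  have : {p : ℕ | p.Prime ∧ p < b * v ∧ p ≡ b * v [MOD a]} = ↑(F v) := by
    ext p; simp [hFmem v p]
  rw [this, Set.ncard_coe_finset]
end

section
/- Let a ≥ 3 and b > a be coprime integers. Then π*(a,b) ≥ π(b−1; a, b) + Σ_{v=2, gcd(v,a)=1}^{a−2} π(bv; a, bv) + π(S(a,b); a, b(a−1)), where π*(a,b) is the number of primes not representable as au + bv with u, v nonnegative integers, S(a,b) = ab − a − b, and the middle sum is taken to be 0 when a = 3. -/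
/-- `piMod x m l` is the number of primes `p ≤ x` with `p ≡ l (mod m)`. -/
noncomputable def piMod (x m l : ℕ) : ℕ :=
  Set.ncard {p : ℕ | p.Prime ∧ p ≤ x ∧ p ≡ l [MOD m]}

/-- `S a b = a*b - a - b` (the Frobenius-type quantity). -/
def S (a b : ℕ) : ℕ := a * b - a - b

/-- Finset of primes `p ≤ x` with `p ≡ r [MOD m]`. -/
def pfin (m x r : ℕ) : Finset ℕ :=
  (Finset.range (x+1)).filter (fun p => p.Prime ∧ p % m = r % m)

lemma piMod_eq_card (x m l : ℕ) : piMod x m l = (pfin m x l).card := by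
  rw [piMod, ← Set.ncard_coe_finset]
  congr 1
  ext p
  simp only [pfin, Finset.coe_filter, Finset.mem_range, Set.mem_setOf_eq, Nat.lt_succ_iff,
    Nat.ModEq]
  tauto

lemma mem_pfin {m x r p : ℕ} :
    p ∈ pfin m x r ↔ p.Prime ∧ p ≤ x ∧ p ≡ r [MOD m] := by
  simp only [pfin, Finset.mem_filter, Finset.mem_range, Nat.lt_succ_iff, Nat.ModEq]
  tauto

/-- Cancellation: `b*v ≡ b*w [MOD a]` with `v, w < a` and coprimality forces `v = w`. -/
lemma eq_of_mul_modEq {a b v w : ℕ} (h : Nat.Coprime a b) (hv : v < a) (hw : w < a)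
    (hm : b * v ≡ b * w [MOD a]) : v = w := by
  have := Nat.ModEq.cancel_left_of_coprime h hm
  have h1 : v % a = w % a := this
  rwa [Nat.mod_eq_of_lt hv, Nat.mod_eq_of_lt hw] at h1

/-- A prime `p ≡ b*v [MOD a]` with `p < b*v` and `1 ≤ v ≤ a-1` is not representable. -/
lemma not_rep {a b v p : ℕ} (ha : 3 ≤ a) (h : Nat.Coprime a b)
    (hv1 : 1 ≤ v) (hv2 : v < a) (hmod : p ≡ b * v [MOD a]) (hlt : p < b * v) :
    ¬ ∃ u w : ℕ, p = a * u + b * w := by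
  rintro ⟨u, w, rfl⟩
  have h0 : a * u + b * w ≡ b * w [MOD a] := by
    have : (a * u + b * w) % a = (b * w) % a := by
      simp [Nat.add_mul_mod_self_left, Nat.mul_mod_right, Nat.mul_add_mod]
    exact this
  have hbw : b * w ≡ b * v [MOD a] := h0.symm.trans hmod
  have hb0 : 0 < b := by
    rcases Nat.eq_zero_or_pos b with hb | hb
    · subst hb; simp at hlt
    · exact hb
  rcases lt_or_ge w a with hwa | hwa
  · have : w = v := eq_of_mul_modEq h hwa hv2 hbw
    subst this
    exact absurd hlt (by simp)
  · have h1 : b * v < b * w := by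
      calc b * v < b * a := mul_lt_mul_of_pos_left hv2 hb0
        _ ≤ b * w := Nat.mul_le_mul_left b hwa
    omega

/-- Non-representable numbers are `< a*b`. -/
lemma lt_of_not_rep {a b n : ℕ} (ha : 3 ≤ a) (h : Nat.Coprime a b)
    (hn : ¬ ∃ u v : ℕ, n = a * u + b * v) : n < a * b := by
  haveI : NeZero a := ⟨by omega⟩
  have hu : IsUnit ((b : ZMod a)) := (ZMod.isUnit_iff_coprime b a).2 h.symm
  obtain ⟨v0, hv0, hmod⟩ : ∃ v0, v0 < a ∧ b * v0 ≡ n [MOD a] := by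
    refine ⟨(((b : ZMod a))⁻¹ * (n : ZMod a)).val, ZMod.val_lt _, ?_⟩
    rw [← ZMod.natCast_eq_natCast_iff]
    push_cast
    rw [ZMod.natCast_val, ZMod.cast_id]
    rw [← mul_assoc, ZMod.mul_inv_of_unit _ hu, one_mul]
  by_cases hge : b * v0 ≤ n
  · exfalso
    obtain ⟨u, hu'⟩ := (Nat.modEq_iff_dvd' hge).mp hmod
    exact hn ⟨u, v0, by omega⟩
  · push_neg at hge
    have : b * v0 ≤ b * (a - 1) := Nat.mul_le_mul_left b (by omega)
    have h2 : b * (a - 1) < a * b := by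
      have hb : 0 < b := Nat.pos_of_ne_zero (fun h0 => by
        subst h0; rw [Nat.coprime_zero_right] at h; omega)
      calc b * (a - 1) < b * a := mul_lt_mul_of_pos_left (by omega) hb
        _ = a * b := Nat.mul_comm b a
    exact lt_of_lt_of_le hge (this.trans h2.le)

theorem piStar_lower_bound_sum (a b : ℕ) (ha : 3 ≤ a) (hab : a < b)
    (h : Nat.Coprime a b) :
    piMod (b - 1) a b +
      (∑ v ∈ (Finset.Icc 2 (a - 2)).filter (fun v => Nat.gcd v a = 1),
        piMod (b * v) a (b * v)) +
      piMod (S a b) a (b * (a - 1)) ≤ piStar a b := by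
  classical
  have hb4 : 4 ≤ b := by omega
  set F := (Finset.Icc 2 (a - 2)).filter (fun v => Nat.gcd v a = 1) with hF
  -- the three Finsets
  set A1 := pfin a (b - 1) b with hA1
  set Af : ℕ → Finset ℕ := fun v => pfin a (b * v) (b * v) with hAf
  set A3 := pfin a (S a b) (b * (a - 1)) with hA3
  set U := A1 ∪ F.biUnion Af ∪ A3 with hU
  -- residue characterization to prove disjointness
  have hres : ∀ v p, p ∈ pfin a (b * v) (b * v) → p ≡ b * v [MOD a] :=
    fun v p hp => (mem_pfin.mp hp).2.2
  have hres1 : ∀ p, p ∈ A1 → p ≡ b * 1 [MOD a] := by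
    intro p hp; rw [mul_one]; exact (mem_pfin.mp hp).2.2
  have hres3 : ∀ p, p ∈ A3 → p ≡ b * (a - 1) [MOD a] := fun p hp => (mem_pfin.mp hp).2.2
  -- generic disjointness from distinct residue indices
  have hdisj : ∀ (v w : ℕ), v < a → w < a → v ≠ w →
      ∀ p, p ≡ b * v [MOD a] → p ≡ b * w [MOD a] → False := by
    intro v w hv hw hvw p h1 h2
    exact hvw (eq_of_mul_modEq h hv hw (h1.symm.trans h2))
  have hFmem : ∀ v ∈ F, 2 ≤ v ∧ v ≤ a - 2 := by
    intro v hv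
    rw [hF, Finset.mem_filter, Finset.mem_Icc] at hv
    exact ⟨hv.1.1, hv.1.2⟩
  -- card of U equals sum
  have hdisjF : ∀ v ∈ F, ∀ w ∈ F, v ≠ w → Disjoint (Af v) (Af w) := by
    intro v hv w hw hvw
    rw [Finset.disjoint_left]
    intro p hp hq
    exact hdisj v w (by have := hFmem v hv; omega) (by have := hFmem w hw; omega) hvw p
      (hres v p hp) (hres w p hq)
  have hd1 : Disjoint A1 (F.biUnion Af) := by
    rw [Finset.disjoint_left]
    intro p hp hq
    rw [Finset.mem_biUnion] at hq
    obtain ⟨v, hv, hpv⟩ := hq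
    exact hdisj 1 v (by omega) (by have := hFmem v hv; omega) (by have := hFmem v hv; omega) p
      (hres1 p hp) (hres v p hpv)
  have hd3 : Disjoint (A1 ∪ F.biUnion Af) A3 := by
    rw [Finset.disjoint_left]
    intro p hp hq
    rw [Finset.mem_union] at hp
    rcases hp with hp | hp
    · exact hdisj 1 (a - 1) (by omega) (by omega) (by omega) p (hres1 p hp) (hres3 p hq)
    · rw [Finset.mem_biUnion] at hp
      obtain ⟨v, hv, hpv⟩ := hp
      exact hdisj v (a - 1) (by have := hFmem v hv; omega) (by omega)
        (by have := hFmem v hv; omega) p (hres v p hpv) (hres3 p hq)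
  have hcard : U.card = A1.card + (∑ v ∈ F, (Af v).card) + A3.card := by
    rw [hU, Finset.card_union_of_disjoint hd3, Finset.card_union_of_disjoint hd1,
      Finset.card_biUnion hdisjF]
  -- membership in U gives a non-representable prime
  have hUsub : ∀ p ∈ U, p.Prime ∧ ¬ ∃ u v : ℕ, p = a * u + b * v := by
    intro p hp
    rw [hU, Finset.mem_union, Finset.mem_union] at hp
    rcases hp with (hp | hp) | hp
    · obtain ⟨hpr, hple, hpmod⟩ := mem_pfin.mp hp
      refine ⟨hpr, not_rep ha h (le_refl 1) (by omega) (by rwa [mul_one]) ?_⟩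
      have := hpr.two_le; omega
    · rw [Finset.mem_biUnion] at hp
      obtain ⟨v, hv, hpv⟩ := hp
      obtain ⟨hv2, hva⟩ := hFmem v hv
      obtain ⟨hpr, hple, hpmod⟩ := mem_pfin.mp hpv
      refine ⟨hpr, not_rep ha h (by omega) (by omega) hpmod ?_⟩
      -- p ≤ b*v and p prime, b*v not prime since b ≥ 4, v ≥ 2
      rcases Nat.lt_or_ge p (b * v) with hlt | hge
      · exact hlt
      · exfalso
        have : p = b * v := le_antisymm hple hge
        rw [this] at hpr
        rcases (Nat.prime_mul_iff.mp hpr) with ⟨_, h1⟩ | ⟨_, h1⟩ <;> omega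
    · obtain ⟨hpr, hple, hpmod⟩ := mem_pfin.mp hp
      refine ⟨hpr, not_rep ha h (by omega) (by omega) hpmod ?_⟩
      have hS : S a b < b * (a - 1) := by
        have h1 : b * (a - 1) = a * b - b := by
          rw [Nat.mul_sub, Nat.mul_one, Nat.mul_comm]
        have h2 : a + b ≤ a * b := by
          calc a + b ≤ b + b := by omega
            _ ≤ 3 * b := by omega
            _ ≤ a * b := Nat.mul_le_mul_right b ha
        rw [S, h1]; omega
      omega
  -- the star set is finite
  have hfin : {p : ℕ | p.Prime ∧ ¬ ∃ u v : ℕ, p = a * u + b * v}.Finite := by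
    apply (Set.finite_Iio (a * b)).subset
    intro p hp
    exact lt_of_not_rep ha h hp.2
  have hsub : (↑U : Set ℕ) ⊆ {p : ℕ | p.Prime ∧ ¬ ∃ u v : ℕ, p = a * u + b * v} := by
    intro p hp
    exact hUsub p hp
  have hle : U.card ≤ piStar a b := by
    rw [piStar, ← Set.ncard_coe_finset U]
    exact Set.ncard_le_ncard hsub hfin
  calc piMod (b - 1) a b + (∑ v ∈ F, piMod (b * v) a (b * v)) + piMod (S a b) a (b * (a - 1))
      = A1.card + (∑ v ∈ F, (Af v).card) + A3.card := by
        rw [piMod_eq_card, piMod_eq_card]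
        congr 1
        congr 1
        exact Finset.sum_congr rfl (fun v _ => piMod_eq_card _ _ _)
    _ = U.card := hcard.symm
    _ ≤ piStar a b := hle
end

section
/- Let a ≥ 3 and b > a be coprime integers. Then π*(a,b) ≤ Σ_{v=1, gcd(v,a)=1}^{a−1} π(bv; a, bv) + ω(a), where π*(a,b) is the number of primes not representable as au + bv with u, v nonnegative integers and ω(a) is the number of distinct prime factors of a. -/
theorem piStar_upper_bound_sum (a b : ℕ) (ha : 3 ≤ a) (hab : a < b)
    (h : Nat.Coprime a b) :
    piStar a b ≤
      (∑ v ∈ (Finset.Icc 1 (a - 1)).filter (fun v => Nat.gcd v a = 1),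
        piMod (b * v) a (b * v)) + a.primeFactors.card := by
  classical
  haveI : NeZero a := ⟨by omega⟩
  set F := (Finset.Icc 1 (a - 1)).filter (fun v => Nat.gcd v a = 1) with hF
  set T : Finset ℕ :=
    (F.biUnion fun v =>
      (Finset.Iic (b * v)).filter (fun p => p.Prime ∧ p ≡ b * v [MOD a]))
      ∪ a.primeFactors with hT
  have hsub : {p : ℕ | p.Prime ∧ ¬ ∃ u v : ℕ, p = a * u + b * v} ⊆ (↑T : Set ℕ) := by
    rintro p ⟨hp, hnr⟩
    have hbu : IsUnit (b : ZMod a) := (ZMod.isUnit_iff_coprime b a).mpr h.symm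
    set v := ((p : ZMod a) * (b : ZMod a)⁻¹).val with hv
    have hvlt : v < a := ZMod.val_lt _
    have hmod : b * v ≡ p [MOD a] := by
      have : ((b * v : ℕ) : ZMod a) = (p : ZMod a) := by
        push_cast [hv]
        rw [ZMod.natCast_val, ZMod.cast_id]
        rw [mul_comm (p : ZMod a), ← mul_assoc, ZMod.mul_inv_of_unit _ hbu, one_mul]
      exact (ZMod.natCast_eq_natCast_iff _ _ _).mp this
    have hplt : p < b * v := by
      by_contra hge
      push_neg at hge
      obtain ⟨u, hu⟩ := (Nat.modEq_iff_dvd' hge).mp hmod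
      exact hnr ⟨u, v, by omega⟩
    have hv1 : 1 ≤ v := by
      by_contra hv0
      have : v = 0 := by omega
      simp [this] at hplt
    by_cases hgcd : Nat.gcd v a = 1
    · -- p is in the biUnion part
      have hvF : v ∈ F := by
        simp only [hF, Finset.mem_filter, Finset.mem_Icc]
        exact ⟨⟨hv1, by omega⟩, hgcd⟩
      simp only [hT, Finset.coe_union, Set.mem_union, Finset.mem_coe,
        Finset.mem_biUnion]
      exact Or.inl ⟨v, hvF, by
        simp only [Finset.mem_filter, Finset.mem_Iic]
        exact ⟨le_of_lt hplt, hp, hmod.symm⟩⟩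
    · -- p divides a
      set d := Nat.gcd v a with hd
      have hd2 : 2 ≤ d := by
        have : d ≠ 0 := by
          intro h0
          rw [hd, Nat.gcd_eq_zero_iff] at h0
          omega
        omega
      set q := d.minFac with hq
      have hqp : q.Prime := Nat.minFac_prime (by omega)
      have hqv : q ∣ v := (Nat.minFac_dvd d).trans (Nat.gcd_dvd_left v a)
      have hqa : q ∣ a := (Nat.minFac_dvd d).trans (Nat.gcd_dvd_right v a)
      have hmodq : b * v ≡ p [MOD q] := hmod.of_dvd hqa
      have hqbv : q ∣ b * v := Dvd.dvd.mul_left hqv b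
      have hqp' : q ∣ p := by
        have h0 : p ≡ 0 [MOD q] :=
          hmodq.symm.trans ((Nat.modEq_zero_iff_dvd).mpr hqbv)
        exact (Nat.modEq_zero_iff_dvd).mp h0
      have hqep : q = p := (Nat.prime_dvd_prime_iff_eq hqp hp).mp hqp'
      have hpa : p ∣ a := hqep ▸ hqa
      simp only [hT, Finset.coe_union, Set.mem_union, Finset.mem_coe]
      exact Or.inr (Nat.mem_primeFactors.mpr ⟨hp, hpa, by omega⟩)
  have key : piStar a b ≤ T.card := by
    have := Set.ncard_le_ncard hsub T.finite_toSet
    rwa [Set.ncard_coe_finset] at this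
  have hTcard : T.card ≤ (∑ v ∈ F, piMod (b * v) a (b * v)) + a.primeFactors.card := by
    have h1 : T.card ≤
        (F.biUnion fun v =>
          (Finset.Iic (b * v)).filter (fun p => p.Prime ∧ p ≡ b * v [MOD a])).card
        + a.primeFactors.card := Finset.card_union_le _ _
    have h2 : (F.biUnion fun v =>
          (Finset.Iic (b * v)).filter (fun p => p.Prime ∧ p ≡ b * v [MOD a])).card
        ≤ ∑ v ∈ F, ((Finset.Iic (b * v)).filter
            (fun p => p.Prime ∧ p ≡ b * v [MOD a])).card :=
      Finset.card_biUnion_le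
    have h3 : ∀ v ∈ F, ((Finset.Iic (b * v)).filter
        (fun p => p.Prime ∧ p ≡ b * v [MOD a])).card = piMod (b * v) a (b * v) := by
      intro v _
      rw [piMod]
      have : {p : ℕ | p.Prime ∧ p ≤ b * v ∧ p ≡ b * v [MOD a]} =
          ↑((Finset.Iic (b * v)).filter (fun p => p.Prime ∧ p ≡ b * v [MOD a])) := by
        ext p
        simp only [Set.mem_setOf_eq, Finset.coe_filter, Finset.mem_Iic,
          Set.mem_setOf_eq]
        tauto
      rw [this, Set.ncard_coe_finset]
    calc T.card ≤ _ + a.primeFactors.card := h1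
      _ ≤ (∑ v ∈ F, ((Finset.Iic (b * v)).filter
            (fun p => p.Prime ∧ p ≡ b * v [MOD a])).card) + a.primeFactors.card := by
          exact Nat.add_le_add_right h2 _
      _ = (∑ v ∈ F, piMod (b * v) a (b * v)) + a.primeFactors.card := by
          rw [Finset.sum_congr rfl h3]
  exact key.trans hTcard
end

section
/- For every positive integer a, the number of integers v with 1 ≤ v ≤ 0.1·a and gcd(v,a) = 1 is at most 0.1·φ(a) + 2^{ω(a)}, where φ is Euler's totient function and ω(a) is the number of distinct prime factors of a. -/
open Finset ArithmeticFunction ArithmeticFunction.Moebius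

private theorem count_eq_sum' (a N : ℕ) (ha : 0 < a) :
    (((Finset.Ioc 0 N).filter (fun v => Nat.gcd v a = 1)).card : ℤ)
      = ∑ d ∈ a.divisors, μ d * (N / d : ℕ) := by
  have key : ∀ v : ℕ, (if Nat.gcd v a = 1 then (1:ℤ) else 0)
      = ∑ d ∈ (Nat.gcd v a).divisors, μ d := by
    intro v
    rw [← coe_mul_zeta_apply, moebius_mul_coe_zeta, ArithmeticFunction.one_apply]
  rw [Finset.card_filter]
  push_cast
  simp_rw [key]
  have hdiv : ∀ v : ℕ, (Nat.gcd v a).divisors = a.divisors.filter (fun d => d ∣ v) := by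
    intro v
    ext d
    simp only [Nat.mem_divisors, Finset.mem_filter, Nat.dvd_gcd_iff]
    constructor
    · rintro ⟨⟨h1, h2⟩, -⟩; exact ⟨⟨h2, ha.ne'⟩, h1⟩
    · rintro ⟨⟨h2, -⟩, h1⟩
      exact ⟨⟨h1, h2⟩, fun h => ha.ne' (Nat.eq_zero_of_gcd_eq_zero_right h)⟩
  rw [Finset.sum_congr rfl (fun v _ => by rw [hdiv v, Finset.sum_filter])]
  rw [Finset.sum_comm]
  refine Finset.sum_congr rfl fun d hd => ?_
  rw [← Finset.sum_filter, Finset.sum_const, Nat.Ioc_filter_dvd_card_eq_div]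
  rw [nsmul_eq_mul, mul_comm]
  norm_cast

private theorem totient_eq_sum' (a : ℕ) (ha : 0 < a) :
    (Nat.totient a : ℝ) = ∑ d ∈ a.divisors, (μ d : ℝ) * ((a / d : ℕ) : ℝ) := by
  have h := (sum_eq_iff_sum_mul_moebius_eq (R := ℝ)
      (f := fun n => (Nat.totient n : ℝ)) (g := fun n => (n : ℝ))).mp
    (fun n hn => by exact_mod_cast congrArg (Nat.cast (R := ℝ)) (Nat.sum_totient n)) a ha
  rw [← h, Nat.sum_divisorsAntidiagonal (f := fun d e => (μ d : ℝ) * (e : ℝ))]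

private theorem sq_div_card' (a : ℕ) (ha : a ≠ 0) :
    (a.divisors.filter Squarefree).card = 2 ^ a.primeFactors.card := by
  have h := Nat.sum_divisors_filter_squarefree (n := a) (f := fun _ => (1:ℕ)) ha
  simp only [Finset.sum_const, smul_eq_mul, mul_one] at h
  rw [h, Finset.card_powerset, Nat.factors_eq]
  congr 1

theorem count_coprime_le (a : ℕ) (ha : 0 < a) :
    (Set.ncard {v : ℕ | 1 ≤ v ∧ (v : ℝ) ≤ 0.1 * (a : ℝ) ∧ Nat.gcd v a = 1} : ℝ)
      ≤ 0.1 * (Nat.totient a : ℝ) + 2 ^ a.primeFactors.card := by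
  set N : ℕ := ⌊(0.1 : ℝ) * a⌋₊ with hN
  have h01 : (0:ℝ) ≤ 0.1 * a := by positivity
  have hset : {v : ℕ | 1 ≤ v ∧ (v : ℝ) ≤ 0.1 * (a : ℝ) ∧ Nat.gcd v a = 1}
      = ↑((Finset.Ioc 0 N).filter (fun v => Nat.gcd v a = 1)) := by
    ext v
    simp only [Set.mem_setOf_eq, Finset.coe_filter, Finset.mem_Ioc, Set.mem_setOf_eq,
      hN, Nat.le_floor_iff h01]
    constructor
    · rintro ⟨h1, h2, h3⟩; exact ⟨⟨h1, h2⟩, h3⟩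
    · rintro ⟨⟨h1, h2⟩, h3⟩; exact ⟨h1, h2, h3⟩
  rw [hset, Set.ncard_coe_finset]
  have hcount : ((((Finset.Ioc 0 N).filter (fun v => Nat.gcd v a = 1)).card : ℝ))
      = ∑ d ∈ a.divisors, (μ d : ℝ) * ((N / d : ℕ) : ℝ) := by
    have h := count_eq_sum' a N ha
    calc ((((Finset.Ioc 0 N).filter (fun v => Nat.gcd v a = 1)).card : ℝ))
        = (((((Finset.Ioc 0 N).filter (fun v => Nat.gcd v a = 1)).card : ℤ)) : ℝ) := by
          push_cast; ring
      _ = (((∑ d ∈ a.divisors, μ d * (N / d : ℕ) : ℤ)) : ℝ) := by rw [h]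
      _ = ∑ d ∈ a.divisors, (μ d : ℝ) * ((N / d : ℕ) : ℝ) := by
          rw [Int.cast_sum]
          refine Finset.sum_congr rfl fun d _ => ?_
          rw [Int.cast_mul, Int.cast_natCast]
  rw [hcount]
  have habs : (∑ d ∈ a.divisors, |(μ d : ℝ)|)
      = (2 : ℝ) ^ a.primeFactors.card := by
    have h1 : (∑ d ∈ a.divisors, |(μ d : ℝ)|)
        = ((a.divisors.filter Squarefree).card : ℝ) := by
      rw [Finset.card_filter]
      push_cast
      refine Finset.sum_congr rfl fun d _ => ?_
      have h2 : |(μ d : ℝ)| = ((|μ d| : ℤ) : ℝ) := by push_cast; ring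
      rw [h2, abs_moebius]
      split <;> simp
    rw [h1, sq_div_card' a ha.ne']
    push_cast
    ring
  have hbound : ∑ d ∈ a.divisors, (μ d : ℝ) * ((N / d : ℕ) : ℝ)
      ≤ ∑ d ∈ a.divisors, ((μ d : ℝ) * (0.1 * ((a / d : ℕ) : ℝ)) + |(μ d : ℝ)|) := by
    refine Finset.sum_le_sum fun d hd => ?_
    obtain ⟨hda, -⟩ := Nat.mem_divisors.mp hd
    have hd0 : 0 < d := Nat.pos_of_dvd_of_pos hda ha
    have hNd : ((N / d : ℕ) : ℝ) * d ≤ 0.1 * a := by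
      calc ((N / d : ℕ) : ℝ) * d = ((N / d * d : ℕ) : ℝ) := by push_cast; ring
        _ ≤ (N : ℝ) := by exact_mod_cast Nat.div_mul_le_self N d
        _ ≤ 0.1 * a := Nat.floor_le h01
    have hNd2 : 0.1 * (a : ℝ) < (((N / d : ℕ) : ℝ) + 1) * d := by
      have h1 : (0.1 : ℝ) * a < N + 1 := Nat.lt_floor_add_one _
      have h2 : (N : ℝ) + 1 ≤ ((N / d : ℕ) : ℝ) * d + d := by
        have h3 : N + 1 ≤ d * (N / d) + d := by
          have := Nat.div_add_mod N d
          have := Nat.mod_lt N hd0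
          omega
        have h4 : (N : ℝ) + 1 ≤ ((d * (N / d) + d : ℕ) : ℝ) := by exact_mod_cast h3
        push_cast at h4
        linarith
      nlinarith
    have had : ((a / d : ℕ) : ℝ) * d = (a : ℝ) := by
      exact_mod_cast congrArg (Nat.cast (R := ℝ)) (Nat.div_mul_cancel hda)
    have hdpos : (0:ℝ) < d := by exact_mod_cast hd0
    have hμ : μ d = 1 ∨ μ d = 0 ∨ μ d = -1 := by
      have h1 := abs_moebius_le_one (n := d)
      rw [abs_le] at h1
      omega
    rcases hμ with h | h | h <;> rw [h]
    · push_cast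
      rw [abs_one, one_mul, one_mul]
      have h3 : ((N / d : ℕ) : ℝ) * d ≤ (0.1 * ((a / d : ℕ) : ℝ)) * d := by
        rw [mul_assoc, had]; exact hNd
      have h4 := le_of_mul_le_mul_right h3 hdpos
      linarith
    · simp
    · push_cast
      rw [abs_neg, abs_one]
      have h3 : (0.1 * ((a / d : ℕ) : ℝ)) * d < (((N / d : ℕ) : ℝ) + 1) * d := by
        rw [mul_assoc, had]; exact hNd2
      have h4 := lt_of_mul_lt_mul_right h3 hdpos.le
      linarith
  calc _ ≤ _ := hbound
    _ = 0.1 * (Nat.totient a : ℝ) + 2 ^ a.primeFactors.card := by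
        rw [Finset.sum_add_distrib, habs, totient_eq_sum' a ha, Finset.mul_sum]
        congr 1
        refine Finset.sum_congr rfl fun d _ => by ring
end

section
/- For every positive integer a, 2^{ω(a)}/φ(a) ≤ √30/√a, where φ is Euler's totient function and ω(a) is the number of distinct prime factors of a. -/
open Nat

-- combining lemma for a coprime prime-power factor
lemma step' (p k m s t c d : ℕ) (hp : p.Prime) (hm : 0 < m) (hpm : ¬ p ∣ m)
    (h1 : s * (p ^ k * 4 ^ (if k = 0 then 0 else 1)) ≤ c * (Nat.totient (p ^ k)) ^ 2)
    (h2 : t * (m * 4 ^ m.primeFactors.card) ≤ d * (Nat.totient m) ^ 2) :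
    (s * t) * ((p ^ k * m) * 4 ^ (p ^ k * m).primeFactors.card)
      ≤ (c * d) * (Nat.totient (p ^ k * m)) ^ 2 := by
  have hcop : (p ^ k).Coprime m := (hp.coprime_iff_not_dvd.mpr hpm).pow_left k
  rcases Nat.eq_zero_or_pos k with hk | hk
  · subst hk
    simp only [pow_zero, one_mul, if_pos rfl] at h1 ⊢
    calc s * t * (m * 4 ^ m.primeFactors.card)
        = (s * 1) * (t * (m * 4 ^ m.primeFactors.card)) := by ring
      _ ≤ (c * (Nat.totient 1) ^ 2) * (d * (Nat.totient m) ^ 2) :=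
          Nat.mul_le_mul h1 h2
      _ = c * d * (Nat.totient m) ^ 2 := by simp [Nat.totient_one]; ring
  · have hpk : p ∉ m.primeFactors := fun h => hpm (Nat.dvd_of_mem_primeFactors h)
    have hcard : (p ^ k * m).primeFactors.card = m.primeFactors.card + 1 := by
      rw [hcop.primeFactors_mul, Nat.primeFactors_prime_pow hk.ne' hp,
        ← Finset.insert_eq, Finset.card_insert_of_notMem hpk]
    rw [hcard, Nat.totient_mul hcop]
    rw [if_neg hk.ne'] at h1
    calc (s * t) * ((p ^ k * m) * 4 ^ (m.primeFactors.card + 1))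
        = (s * (p ^ k * 4 ^ 1)) * (t * (m * 4 ^ m.primeFactors.card)) := by ring
      _ ≤ (c * (Nat.totient (p ^ k)) ^ 2) * (d * (Nat.totient m) ^ 2) :=
          Nat.mul_le_mul h1 h2
      _ = (c * d) * ((Nat.totient (p ^ k)) * (Nat.totient m)) ^ 2 := by ring

lemma L2 (x : ℕ) :
    2 ^ x * 4 ^ (if x = 0 then 0 else 1) ≤ 8 * (Nat.totient (2 ^ x)) ^ 2 := by
  cases x with
  | zero => simp
  | succ n =>
    rw [if_neg n.succ_ne_zero, Nat.totient_prime_pow_succ Nat.prime_two]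
    have h : 2 ^ n ≤ 4 ^ n := Nat.pow_le_pow_left (by norm_num) n
    calc 2 ^ (n + 1) * 4 ^ 1 = 8 * 2 ^ n := by ring
      _ ≤ 8 * (2 ^ n * 2 ^ n) := by nlinarith [Nat.one_le_two_pow (n := n)]
      _ = 8 * (2 ^ n * (2 - 1)) ^ 2 := by ring

lemma L3 (y : ℕ) :
    3 ^ y * 4 ^ (if y = 0 then 0 else 1) ≤ 3 * (Nat.totient (3 ^ y)) ^ 2 := by
  cases y with
  | zero => simp
  | succ n =>
    rw [if_neg n.succ_ne_zero, Nat.totient_prime_pow_succ Nat.prime_three]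
    have h : 3 ^ n ≤ 9 ^ n := Nat.pow_le_pow_left (by norm_num) n
    calc 3 ^ (n + 1) * 4 ^ 1 = 12 * 3 ^ n := by ring
      _ ≤ 12 * 9 ^ n := by omega
      _ = 3 * (3 ^ n * (3 - 1)) ^ 2 := by
          rw [show (3:ℕ) - 1 = 2 from rfl, show (9:ℕ) = 3 * 3 from rfl, mul_pow]
          ring

lemma L5 (z : ℕ) :
    4 * (5 ^ z * 4 ^ (if z = 0 then 0 else 1)) ≤ 5 * (Nat.totient (5 ^ z)) ^ 2 := by
  cases z with
  | zero => simp
  | succ n =>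
    rw [if_neg n.succ_ne_zero, Nat.totient_prime_pow_succ (by norm_num)]
    have h : 5 ^ n ≤ 25 ^ n := Nat.pow_le_pow_left (by norm_num) n
    calc 4 * (5 ^ (n + 1) * 4 ^ 1) = 80 * 5 ^ n := by ring
      _ ≤ 80 * 25 ^ n := by omega
      _ = 5 * (5 ^ n * (5 - 1)) ^ 2 := by
          rw [show (5:ℕ) - 1 = 4 from rfl, show (25:ℕ) = 5 * 5 from rfl, mul_pow]
          ring

lemma Llarge (p k : ℕ) (hp : p.Prime) (hp7 : 7 ≤ p) (hk : 0 < k) :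
    p ^ k * 4 ^ (if k = 0 then 0 else 1) ≤ 1 * (Nat.totient (p ^ k)) ^ 2 := by
  rw [if_neg hk.ne', Nat.totient_prime_pow hp hk, one_mul]
  obtain ⟨q, rfl⟩ : ∃ q, p = q + 1 := ⟨p - 1, by omega⟩
  have hq : 6 ≤ q := by omega
  obtain ⟨j, rfl⟩ : ∃ j, k = j + 1 := ⟨k - 1, by omega⟩
  simp only [Nat.add_sub_cancel]
  have h1 : (q + 1) ^ j ≤ ((q + 1) ^ j) ^ 2 := by
    nlinarith [Nat.one_le_two_pow (n := j), Nat.one_le_pow j (q+1) (by omega)]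
  calc (q + 1) ^ (j + 1) * 4 ^ 1 = (q + 1) ^ j * (4 * (q + 1)) := by ring
    _ ≤ (q + 1) ^ j * (q * q) := by
        have : 4 * (q + 1) ≤ q * q := by nlinarith
        exact Nat.mul_le_mul_left _ this
    _ ≤ ((q + 1) ^ j) ^ 2 * (q * q) := Nat.mul_le_mul_right _ h1
    _ = ((q + 1) ^ (j + 1 - 1) * q) ^ 2 := by simp; ring

lemma main_nat : ∀ a : ℕ, 0 < a →
    a * 4 ^ a.primeFactors.card ≤ 30 * (Nat.totient a) ^ 2 := by
  intro a
  induction a using Nat.strong_induction_on with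
  | _ a IH =>
  intro ha
  by_cases hbig : ∃ p ∈ a.primeFactors, 7 ≤ p
  · obtain ⟨p, hpmem, hp7⟩ := hbig
    have hp : p.Prime := Nat.prime_of_mem_primeFactors hpmem
    set k := a.factorization p with hkdef
    have hk : 0 < k := hp.factorization_pos_of_dvd ha.ne'
      (Nat.dvd_of_mem_primeFactors hpmem)
    set m := ordCompl[p] a with hmdef
    have hm : 0 < m := Nat.ordCompl_pos p ha.ne'
    have hpm : ¬ p ∣ m := Nat.not_dvd_ordCompl hp ha.ne'
    have heq : p ^ k * m = a := Nat.ordProj_mul_ordCompl_eq_self a p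
    have hmlt : m < a := by
      rw [hmdef]
      exact Nat.div_lt_self ha (Nat.one_lt_pow hk.ne' hp.one_lt)
    have h2 := IH m hmlt hm
    have := step' p k m 1 1 1 30 hp hm hpm
      (by simpa using Llarge p k hp hp7 hk) (by simpa using h2)
    simpa [heq] using this
  · push_neg at hbig
    -- all prime factors are ≤ 5, hence in {2,3,5}
    set z := a.factorization 5 with hz
    set b := ordCompl[5] a with hbdef
    have hb : 0 < b := Nat.ordCompl_pos 5 ha.ne'
    have h5b : ¬ (5 : ℕ) ∣ b := Nat.not_dvd_ordCompl (by norm_num) ha.ne'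
    have heqa : 5 ^ z * b = a := Nat.ordProj_mul_ordCompl_eq_self a 5
    set y := b.factorization 3 with hy
    set c := ordCompl[3] b with hcdef
    have hc : 0 < c := Nat.ordCompl_pos 3 hb.ne'
    have h3c : ¬ (3 : ℕ) ∣ c := Nat.not_dvd_ordCompl (by norm_num) hb.ne'
    have heqb : 3 ^ y * c = b := Nat.ordProj_mul_ordCompl_eq_self b 3
    set x := c.factorization 2 with hx
    set e := ordCompl[2] c with hedef
    have he : 0 < e := Nat.ordCompl_pos 2 hc.ne'
    have h2e : ¬ (2 : ℕ) ∣ e := Nat.not_dvd_ordCompl (by norm_num) hc.ne'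
    have heqc : 2 ^ x * e = c := Nat.ordProj_mul_ordCompl_eq_self c 2
    have hec : e ∣ c := Nat.ordCompl_dvd c 2
    have hcb : c ∣ b := Nat.ordCompl_dvd b 3
    have hba : b ∣ a := Nat.ordCompl_dvd a 5
    -- every prime factor of e divides a, is ≤ 5, not 2,3,5 : contradiction
    have he1 : e = 1 := by
      by_contra hne
      obtain ⟨q, hqmem⟩ := (Nat.nonempty_primeFactors.mpr
        (by omega : 1 < e))
      have hq : q.Prime := Nat.prime_of_mem_primeFactors hqmem
      have hqe : q ∣ e := Nat.dvd_of_mem_primeFactors hqmem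
      have hqa : q ∣ a := hqe.trans (hec.trans (hcb.trans hba))
      have hq6 : q ≤ 6 := by
        have := hbig q (Nat.mem_primeFactors.mpr ⟨hq, hqa, ha.ne'⟩)
        omega
      have hq2 : q ≠ 2 := fun h => h2e (h ▸ hqe)
      have hq3 : q ≠ 3 := fun h => h3c (h ▸ (hqe.trans hec))
      have hq5 : q ≠ 5 := fun h => h5b (h ▸ (hqe.trans (hec.trans hcb)))
      have h2q : 2 ≤ q := hq.two_le
      interval_cases q <;> simp_all <;> norm_num at hq
    have hc2 : c = 2 ^ x := by rw [← heqc, he1, mul_one]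
    have hwc : (2 ^ x : ℕ).primeFactors.card = if x = 0 then 0 else 1 := by
      rcases eq_or_ne x 0 with h | h
      · simp [h]
      · rw [Nat.primeFactors_prime_pow h Nat.prime_two, if_neg h,
          Finset.card_singleton]
    have hC : 1 * (c * 4 ^ c.primeFactors.card) ≤ 8 * (Nat.totient c) ^ 2 := by
      rw [hc2, hwc, one_mul]; exact L2 x
    have hB := step' 3 y c 1 1 3 8 Nat.prime_three hc h3c
      (by simpa using L3 y) hC
    rw [heqb] at hB
    have hA := step' 5 z b 4 1 5 24 (by norm_num) hb h5b
      (by simpa using L5 z) (by simpa using hB)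
    rw [heqa] at hA
    have h4 : 4 * (a * 4 ^ a.primeFactors.card)
        ≤ 4 * (30 * (Nat.totient a) ^ 2) := by
      calc 4 * (a * 4 ^ a.primeFactors.card)
          = (4 * 1) * (a * 4 ^ a.primeFactors.card) := by ring
        _ ≤ (5 * 24) * (Nat.totient a) ^ 2 := hA
        _ = 4 * (30 * (Nat.totient a) ^ 2) := by ring
    exact Nat.le_of_mul_le_mul_left h4 (by norm_num)

theorem two_pow_omega_div_totient_le (a : ℕ) (ha : 0 < a) :
    (2 : ℝ) ^ a.primeFactors.card / (Nat.totient a : ℝ) ≤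
      Real.sqrt 30 / Real.sqrt a := by
  have hφ : 0 < Nat.totient a := Nat.totient_pos.mpr ha
  have ha' : (0 : ℝ) < a := by exact_mod_cast ha
  rw [div_le_div_iff₀ (by exact_mod_cast hφ) (Real.sqrt_pos.mpr ha')]
  have key : ((a : ℝ)) * 4 ^ a.primeFactors.card
      ≤ 30 * ((Nat.totient a : ℝ)) ^ 2 := by
    exact_mod_cast main_nat a ha
  have h4 : ((4 : ℝ)) ^ a.primeFactors.card
      = ((2 : ℝ) ^ a.primeFactors.card) ^ 2 := by
    rw [← pow_mul, mul_comm, pow_mul]; norm_num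
  calc (2 : ℝ) ^ a.primeFactors.card * Real.sqrt a
      = Real.sqrt ((a : ℝ) * 4 ^ a.primeFactors.card) := by
        rw [Real.sqrt_mul ha'.le, h4, Real.sqrt_sq (by positivity)]; ring
    _ ≤ Real.sqrt (30 * ((Nat.totient a : ℝ)) ^ 2) := Real.sqrt_le_sqrt key
    _ = Real.sqrt 30 * (Nat.totient a : ℝ) := by
        rw [Real.sqrt_mul (by norm_num), Real.sqrt_sq (by positivity)]
end

section
/- For every odd integer b > 3, the number π*(2,b) of primes not representable as 2u + bv with u, v nonnegative integers equals π(b−2) − 1, where π(x) is the number of primes not exceeding x. -/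
theorem piStar_two (b : ℕ) (hb : Odd b) (hb3 : 3 < b) :
    (piStar 2 b : ℤ) = (Nat.primeCounting (b - 2) : ℤ) - 1 := by
  have hset : {p : ℕ | p.Prime ∧ ¬ ∃ u v : ℕ, p = 2 * u + b * v}
      = ↑((Finset.range b).filter (fun p => p.Prime ∧ p ≠ 2)) := by
    ext p
    simp only [Finset.coe_filter, Finset.mem_range, Set.mem_setOf_eq]
    constructor
    · rintro ⟨hp, hrep⟩
      have hodd : Odd p := by
        rcases Nat.even_or_odd p with he | ho
        · obtain ⟨k, hk⟩ := he
          exact absurd ⟨k, 0, by omega⟩ hrep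
        · exact ho
      have hlt : p < b := by
        by_contra h
        push_neg at h
        obtain ⟨k, hk⟩ := hodd
        obtain ⟨m, hm⟩ := hb
        exact hrep ⟨k - m, 1, by omega⟩
      refine ⟨hlt, hp, ?_⟩
      rintro rfl
      exact (Nat.not_odd_iff_even.mpr (by decide)) hodd
    · rintro ⟨hlt, hp, hne⟩
      refine ⟨hp, ?_⟩
      rintro ⟨u, v, rfl⟩
      have hodd : Odd (2 * u + b * v) := hp.odd_of_ne_two hne
      obtain ⟨k, hk⟩ := hodd
      rcases Nat.even_or_odd v with hv | hv
      · obtain ⟨w, hw⟩ := hv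
        have h2 : b * v = 2 * (b * w) := by rw [hw]; ring
        omega
      · have hv1 : 1 ≤ v := hv.pos
        have : b ≤ b * v := Nat.le_mul_of_pos_right b hv1
        omega
  have hpi : piStar 2 b = ((Finset.range b).filter (fun p => p.Prime ∧ p ≠ 2)).card := by
    rw [piStar, hset, Set.ncard_coe_finset]
  set A := (Finset.range b).filter Nat.Prime with hA
  have h2A : 2 ∈ A := by
    simp [hA, Finset.mem_filter, Nat.prime_two]
    omega
  have herase : (Finset.range b).filter (fun p => p.Prime ∧ p ≠ 2) = A.erase 2 := by
    ext p
    simp [hA, Finset.mem_erase, Finset.mem_filter]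
    tauto
  have hcard : piStar 2 b = A.card - 1 := by
    rw [hpi, herase, Finset.card_erase_of_mem h2A]
  have hnotp : ¬ (b - 1).Prime := by
    intro h
    have heven : Even (b - 1) := by
      obtain ⟨m, hm⟩ := hb
      exact ⟨m, by omega⟩
    have := (Nat.Prime.even_iff h).mp heven
    omega
  have hAcard : A.card = Nat.primeCounting (b - 2) := by
    have : Nat.primeCounting (b - 2) = ((Finset.range (b - 1)).filter Nat.Prime).card := by
      have h21 : b - 2 + 1 = b - 1 := by omega
      rw [Nat.primeCounting, Nat.primeCounting', Nat.count_eq_card_filter_range, h21]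
    rw [this, hA]
    have hb' : b = (b - 1) + 1 := by omega
    rw [hb', Finset.range_add_one, Finset.filter_insert]
    simp [hnotp]
  have hpos : 0 < A.card := Finset.card_pos.mpr ⟨2, h2A⟩
  rw [hcard, hAcard] at *
  have : 1 ≤ Nat.primeCounting (b - 2) := by omega
  push_cast [Nat.cast_sub this]
  ring
end
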